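/- The quasiLascoux polynomial Q̄_a stabilizes to the quasiGrothendieck function: for a weak composition a, lim_{m→∞} Q̄_{0^m × a}(x_1, x_2, ...) = S̄_{a⁺}(x_1, x_2, ...). Concretely, for each m, Q̄_{0^m × a}(x_1,...,x_m) = S̄_{a⁺}(x_1,...,x_m). -/

import Mathlib

def Dominates (b a : List ℕ) : Prop :=
  b.length = a.length ∧ ∀ i : ℕ, (a.take i).sum ≤ (b.take i).sum

def posPart (a : List ℕ) : List ℕ := a.filter (fun v => v != 0)
def skyline (a : List ℕ) : Finset (ℕ × ℕ) :=
  (Finset.range a.length).biUnion fun i =>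
    (Finset.range (a.getD i 0)).image fun j => (i + 1, j + 1)
abbrev SVF : Type := ℕ → ℕ → Finset ℕ

def shapeLen (b : List ℕ) (i : ℕ) : ℕ := b.getD (i - 1) 0

def SBox (b : List ℕ) (i j : ℕ) : Prop :=
  1 ≤ i ∧ i ≤ b.length ∧ 1 ≤ j ∧ j ≤ shapeLen b i

def anc (F : SVF) (i j : ℕ) : ℕ := (F i j).sup id

noncomputable def infv (F : SVF) (i j : ℕ) : ℕ := sInf (F i j : Set ℕ)

def InvTriple (be al ga : ℕ) : Prop := (ga < al ∧ al ≤ be) ∨ (al ≤ be ∧ be < ga)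

def RowOK (b : List ℕ) (F : SVF) (i j v : ℕ) : Prop :=
  (j = 1 ∨ v ≤ infv F i (j - 1)) ∧ (¬ SBox b i (j + 1) ∨ anc F i (j + 1) ≤ v)

def SVSSF (b : List ℕ) (F : SVF) : Prop :=
  (∀ i j, (F i j).Nonempty ↔ SBox b i j) ∧
  (∀ i j v, v ∈ F i j → 0 < v) ∧
  (∀ j i i', i ≠ i' → ∀ v, v ∈ F i j → v ∉ F i' j) ∧
  (∀ i j, SBox b i j → SBox b i (j + 1) → anc F i (j + 1) ≤ infv F i j) ∧
  (∀ i i' j, i < i' → SBox b i j → SBox b i (j + 1) → SBox b i' (j + 1) →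
      shapeLen b i' ≤ shapeLen b i → InvTriple (anc F i j) (anc F i (j + 1)) (anc F i' (j + 1))) ∧
  (∀ i i' j, i < i' → SBox b i' j → SBox b i' (j + 1) → SBox b i j →
      shapeLen b i < shapeLen b i' → InvTriple (anc F i' j) (anc F i' (j + 1)) (anc F i j)) ∧
  (∀ i j v, SBox b i j → v ∈ F i j → v ≠ anc F i j →
      ∀ i', SBox b i' j → anc F i' j < anc F i j → v < anc F i' j → ¬ RowOK b F i' j v)

def LASSF (b : List ℕ) (F : SVF) : Prop :=
  SVSSF b F ∧ ∀ i, SBox b i 1 → anc F i 1 = i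

def wtF (b : List ℕ) (F : SVF) (v : ℕ) : ℕ :=
  ((skyline b).filter fun p => v ∈ F p.1 p.2).card

def sizeF (b : List ℕ) (F : SVF) : ℕ := ∑ p ∈ skyline b, (F p.1 p.2).card
noncomputable def vmono (w : ℕ → ℕ) : MvPolynomial ℕ (Polynomial ℤ) :=
  ∏ᶠ v, MvPolynomial.X v ^ w v

noncomputable def atomPoly (b : List ℕ) : MvPolynomial ℕ (Polynomial ℤ) :=
  ∑ᶠ F ∈ {F : SVF | LASSF b F},
    MvPolynomial.C (Polynomial.X ^ (sizeF b F - b.sum)) * vmono (wtF b F)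

noncomputable def quasiLascoux (a : List ℕ) : MvPolynomial ℕ (Polynomial ℤ) :=
  ∑ᶠ b ∈ {b : List ℕ | Dominates b a ∧ posPart b = posPart a}, atomPoly b

noncomputable def quasiGroth (m : ℕ) (α : List ℕ) : MvPolynomial ℕ (Polynomial ℤ) :=
  ∑ᶠ b ∈ {b : List ℕ | b.length = m ∧ posPart b = α}, atomPoly b

/-! ### Auxiliary lemmas -/

lemma mem_skyline_iff (b : List ℕ) (p : ℕ × ℕ) : p ∈ skyline b ↔ SBox b p.1 p.2 := by
  rcases p with ⟨x, y⟩
  simp only [skyline, Finset.mem_biUnion, Finset.mem_range, Finset.mem_image, SBox, shapeLen,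
    Prod.mk.injEq]
  constructor
  · rintro ⟨i, hi, j, hj, rfl, rfl⟩
    have : i + 1 - 1 = i := rfl
    rw [this]
    omega
  · rintro ⟨h1, h2, h3, h4⟩
    refine ⟨x - 1, by omega, y - 1, by omega, by omega, by omega⟩

lemma sbox_le_length {b : List ℕ} {i j : ℕ} (h : SBox b i j) : i ≤ b.length := h.2.1

lemma sbox_of_succ {b : List ℕ} {i j : ℕ} (hj : 1 ≤ j) (h : SBox b i (j + 1)) : SBox b i j :=
  ⟨h.1, h.2.1, hj, le_trans (Nat.le_succ j) h.2.2.2⟩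

/-- all entries in row `i` are at most `i` -/
lemma entry_le {b : List ℕ} {F : SVF} (h : LASSF b F) :
    ∀ j i v, v ∈ F i j → v ≤ i := by
  intro j
  induction j with
  | zero =>
    intro i v hv
    have hb : SBox b i 0 := (h.1.1 i 0).mp ⟨v, hv⟩
    exact absurd hb.2.2.1 (by omega)
  | succ j ih =>
    intro i v hv
    have hbox : SBox b i (j + 1) := (h.1.1 i (j + 1)).mp ⟨v, hv⟩
    have hvle : v ≤ anc F i (j + 1) := Finset.le_sup (f := id) hv
    rcases Nat.eq_zero_or_pos j with hj | hj
    · subst hj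
      have h2 : anc F i (0 + 1) = i := h.2 i hbox
      omega
    · have hboxj : SBox b i j := sbox_of_succ hj hbox
      have h4 := h.1.2.2.2.1 i j hboxj hbox
      obtain ⟨u, hu⟩ := (h.1.1 i j).mpr hboxj
      have h5 : infv F i j ≤ u := Nat.sInf_le hu
      exact le_trans hvle (le_trans h4 (le_trans h5 (ih i u hu)))

lemma wtF_support {b : List ℕ} {F : SVF} (h : LASSF b F) {v : ℕ} (hv : wtF b F v ≠ 0) :
    v ≤ b.length := by
  have : (((skyline b).filter fun p => v ∈ F p.1 p.2)).Nonempty := by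
    rw [← Finset.card_pos]
    exact Nat.pos_of_ne_zero hv
  obtain ⟨p, hp⟩ := this
  rw [Finset.mem_filter] at hp
  have hbox := (mem_skyline_iff b p).mp hp.1
  exact le_trans (entry_le h p.2 p.1 v hp.2) hbox.2.1

/-- the set of LASSF fillings is finite -/
lemma lassf_finite (b : List ℕ) : {F : SVF | LASSF b F}.Finite := by
  rw [← Set.finite_coe_iff]
  set N := b.length + 1 with hN
  have key : ∀ F : {F : SVF | LASSF b F}, ∀ p : {p : ℕ × ℕ // p ∈ skyline b},
      (F : SVF) p.1.1 p.1.2 ∈ (Finset.range N).powerset := by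
    rintro ⟨F, hF⟩ ⟨p, hp⟩
    rw [Finset.mem_powerset]
    intro v hv
    have hbox := (mem_skyline_iff b p).mp hp
    have := le_trans (entry_le hF p.2 p.1 v hv) hbox.2.1
    simp only [Finset.mem_range]
    omega
  let g : {F : SVF | LASSF b F} → ({p : ℕ × ℕ // p ∈ skyline b} → (Finset.range N).powerset) :=
    fun F p => ⟨(F : SVF) p.1.1 p.1.2, key F p⟩
  have hg : Function.Injective g := by
    rintro ⟨F, hF⟩ ⟨G, hG⟩ hFG
    apply Subtype.ext
    funext i j
    by_cases hbox : SBox b i j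
    · have hp : (i, j) ∈ skyline b := (mem_skyline_iff b (i, j)).mpr hbox
      have := congrFun hFG ⟨(i, j), hp⟩
      show F i j = G i j
      simpa only [g, Subtype.mk.injEq] using this
    · have h1 : F i j = ∅ := by
        rw [← Finset.not_nonempty_iff_eq_empty, hF.1.1 i j]; exact hbox
      have h2 : G i j = ∅ := by
        rw [← Finset.not_nonempty_iff_eq_empty, hG.1.1 i j]; exact hbox
      show F i j = G i j
      rw [h1, h2]
  exact Finite.of_injective g hg

/-! ### append zeros invariance -/

lemma getD_append_zeros (b : List ℕ) (k p : ℕ) :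
    (b ++ List.replicate k 0).getD p 0 = b.getD p 0 := by
  rcases lt_or_ge p b.length with h | h
  · exact List.getD_append _ _ _ _ h
  · rw [List.getD_append_right _ _ _ _ h, List.getD_eq_default b _ h]
    rcases lt_or_ge (p - b.length) k with hi | hi
    · rw [List.getD_eq_getElem _ _ (by simpa using hi)]; simp
    · rw [List.getD_eq_default _ _ (by simpa using hi)]

lemma shapeLen_append_zeros (b : List ℕ) (k : ℕ) :
    shapeLen (b ++ List.replicate k 0) = shapeLen b := by
  funext i; exact getD_append_zeros b k (i - 1)

lemma sbox_append_zeros (b : List ℕ) (k : ℕ) :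
    SBox (b ++ List.replicate k 0) = SBox b := by
  funext i j
  apply propext
  unfold SBox
  rw [shapeLen_append_zeros]
  constructor
  · rintro ⟨h1, h2, h3, h4⟩
    refine ⟨h1, ?_, h3, h4⟩
    have : 0 < shapeLen b i := by omega
    unfold shapeLen at this
    by_contra hc
    rw [List.getD_eq_default _ _ (by omega)] at this
    omega
  · rintro ⟨h1, h2, h3, h4⟩
    exact ⟨h1, by simp; omega, h3, h4⟩

lemma skyline_append_zeros (b : List ℕ) (k : ℕ) :
    skyline (b ++ List.replicate k 0) = skyline b := by
  ext p
  rw [mem_skyline_iff, mem_skyline_iff, sbox_append_zeros]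

lemma lassf_append_zeros (b : List ℕ) (k : ℕ) :
    LASSF (b ++ List.replicate k 0) = LASSF b := by
  unfold LASSF SVSSF RowOK
  rw [sbox_append_zeros, shapeLen_append_zeros]

lemma atomPoly_append_zeros (b : List ℕ) (k : ℕ) :
    atomPoly (b ++ List.replicate k 0) = atomPoly b := by
  unfold atomPoly wtF sizeF
  rw [lassf_append_zeros, skyline_append_zeros]
  simp [List.sum_append]

/-! ### posPart lemmas -/

lemma posPart_append (l t : List ℕ) : _root_.posPart (l ++ t) = _root_.posPart l ++ _root_.posPart t :=
  List.filter_append _ _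

lemma posPart_replicate_zero (k : ℕ) : _root_.posPart (List.replicate k 0) = [] := by
  simp only [_root_.posPart]
  simp

lemma posPart_sum (l : List ℕ) : (_root_.posPart l).sum = l.sum := by
  simp only [_root_.posPart]
  induction l with
  | nil => rfl
  | cons x t ih =>
    by_cases hx : x = 0 <;> simp [List.filter_cons, hx] <;> omega

lemma count_zero_posPart (l : List ℕ) : l.count 0 + (_root_.posPart l).length = l.length := by
  simp only [_root_.posPart]
  induction l with
  | nil => rfl
  | cons x t ih =>
    by_cases hx : x = 0 <;>
      simp [List.filter_cons, hx, List.count_cons] <;> omega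

lemma perm_of_posPart_eq {b c : List ℕ} (hl : b.length = c.length)
    (hp : _root_.posPart b = _root_.posPart c) : List.Perm b c := by
  rw [List.perm_iff_count]
  intro x
  by_cases hx : x = 0
  · subst hx
    have h1 := count_zero_posPart b
    have h2 := count_zero_posPart c
    rw [hp] at h1
    omega
  · have hfx : (fun v => v != 0) x = true := by simpa using hx
    have h1 : (_root_.posPart b).count x = b.count x := List.count_filter hfx
    have h2 : (_root_.posPart c).count x = c.count x := List.count_filter hfx
    rw [← h1, ← h2, hp]

/-! ### evaluation lemmas -/

open MvPolynomial in
noncomputable def phi (m : ℕ) : MvPolynomial ℕ (Polynomial ℤ) →+* MvPolynomial ℕ (Polynomial ℤ) :=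
  eval₂Hom C (fun v => if v ≤ m then (X v : MvPolynomial ℕ (Polynomial ℤ)) else 0)

lemma vmono_eq_prod {w : ℕ → ℕ} {s : Finset ℕ} (h : ∀ v, w v ≠ 0 → v ∈ s) :
    vmono w = ∏ v ∈ s, MvPolynomial.X v ^ w v := by
  apply finprod_eq_prod_of_mulSupport_subset
  intro v hv
  simp only [Function.mem_mulSupport] at hv
  by_contra hc
  have hw : w v = 0 := by
    by_contra hw
    exact hc (h v hw)
  rw [hw, pow_zero] at hv
  exact hv rfl

lemma phi_vmono_eq {m N : ℕ} (hNm : N ≤ m) {w : ℕ → ℕ} (h : ∀ v, w v ≠ 0 → v ≤ N) :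
    phi m (vmono w) = vmono w := by
  have hs : ∀ v, w v ≠ 0 → v ∈ Finset.range (N + 1) := fun v hv =>
    Finset.mem_range.mpr (by have := h v hv; omega)
  rw [vmono_eq_prod hs, map_prod]
  apply Finset.prod_congr rfl
  intro v hv
  rw [map_pow]
  have : phi m (MvPolynomial.X v) = MvPolynomial.X v := by
    rw [phi, MvPolynomial.eval₂Hom_X', if_pos (by simp at hv; omega)]
  rw [this]

lemma phi_vmono_zero {m N : ℕ} {w : ℕ → ℕ} (h : ∀ v, w v ≠ 0 → v ≤ N) {i : ℕ}
    (him : m < i) (hi : w i ≠ 0) : phi m (vmono w) = 0 := by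
  have hs : ∀ v, w v ≠ 0 → v ∈ Finset.range (N + 1) := fun v hv =>
    Finset.mem_range.mpr (by have := h v hv; omega)
  rw [vmono_eq_prod hs, map_prod]
  apply Finset.prod_eq_zero (hs i hi)
  rw [map_pow]
  have : phi m (MvPolynomial.X i) = 0 := by
    rw [phi, MvPolynomial.eval₂Hom_X', if_neg (by omega)]
  rw [this, zero_pow hi]

lemma phi_atomPoly_eq {m : ℕ} {b : List ℕ} (hb : b.length ≤ m) :
    phi m (atomPoly b) = atomPoly b := by
  unfold atomPoly
  rw [finsum_mem_eq_finite_toFinset_sum _ (lassf_finite b), map_sum]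
  apply Finset.sum_congr rfl
  intro F hF
  have hF' : LASSF b F := by
    have := (Set.Finite.mem_toFinset _).mp hF
    exact this
  rw [map_mul, phi_vmono_eq hb (fun v hv => wtF_support hF' hv)]
  simp only [phi, MvPolynomial.eval₂Hom_C]

lemma phi_atomPoly_zero {m : ℕ} {b : List ℕ} {p : ℕ} (hp : m ≤ p) (h0 : b.getD p 0 ≠ 0) :
    phi m (atomPoly b) = 0 := by
  unfold atomPoly
  rw [finsum_mem_eq_finite_toFinset_sum _ (lassf_finite b), map_sum]
  apply Finset.sum_eq_zero
  intro F hF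
  have hF' : LASSF b F := by
    have := (Set.Finite.mem_toFinset _).mp hF
    exact this
  have hplen : p < b.length := by
    by_contra hc
    exact h0 (List.getD_eq_default _ _ (by omega))
  have hbox : SBox b (p + 1) 1 := by
    refine ⟨by omega, by omega, le_refl 1, ?_⟩
    show 1 ≤ b.getD (p + 1 - 1) 0
    have : p + 1 - 1 = p := rfl
    rw [this]
    omega
  have hne : (F (p + 1) 1).Nonempty := (hF'.1.1 _ _).mpr hbox
  obtain ⟨u, hu, hsup⟩ := Finset.exists_mem_eq_sup _ hne id
  have hanc : anc F (p + 1) 1 = p + 1 := hF'.2 _ hbox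
  have hmem : p + 1 ∈ F (p + 1) 1 := by
    have heq : p + 1 = u := by rw [← hanc, anc, hsup]; rfl
    exact heq ▸ hu
  have hw : wtF b F (p + 1) ≠ 0 := by
    have : (p + 1, 1) ∈ (skyline b).filter fun q => (p + 1) ∈ F q.1 q.2 :=
      Finset.mem_filter.mpr ⟨(mem_skyline_iff b _).mpr hbox, hmem⟩
    have := Finset.card_pos.mpr ⟨_, this⟩
    unfold wtF
    omega
  rw [map_mul,
    phi_vmono_zero (fun v hv => wtF_support hF' hv) (by omega : m < p + 1) hw, mul_zero]

lemma sum_take_le (l : List ℕ) (n : ℕ) : (l.take n).sum ≤ l.sum :=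
  Nat.le.intro (List.sum_take_add_sum_drop l n)

theorem stmt6 (a : List ℕ) (m : ℕ) :
    MvPolynomial.eval₂Hom (MvPolynomial.C)
        (fun v => if v ≤ m then (MvPolynomial.X v : MvPolynomial ℕ (Polynomial ℤ)) else 0)
        (quasiLascoux (List.replicate m 0 ++ a))
      = quasiGroth m (posPart a) := by
  classical
  set c := List.replicate m 0 ++ a with hc
  have hclen : c.length = m + a.length := by simp [hc]
  have hcsum : c.sum = a.sum := by simp [hc]
  have hpc : _root_.posPart c = _root_.posPart a := by
    rw [hc, posPart_append, posPart_replicate_zero, List.nil_append]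
  set S : Set (List ℕ) := {b | Dominates b c ∧ _root_.posPart b = _root_.posPart c} with hSdef
  have hS : S.Finite := by
    apply (c.permutations.finite_toSet).subset
    rintro b ⟨hd, hp⟩
    exact List.mem_permutations.mpr (perm_of_posPart_eq hd.1 hp)
  have hmapS : ∀ b' : List ℕ, b'.length = m → _root_.posPart b' = _root_.posPart a →
      (b' ++ List.replicate a.length 0) ∈ S := by
    intro b' hlen hpos
    have hsum : b'.sum = a.sum := by rw [← posPart_sum b', hpos, posPart_sum]
    refine ⟨⟨by simp [hclen, hlen], ?_⟩, ?_⟩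
    · intro i
      rcases le_or_gt i m with him | him
      · have h1 : (c.take i).sum = 0 := by
          apply List.sum_eq_zero
          intro x hx
          rw [hc, List.take_append_of_le_length (by simp [him])] at hx
          exact List.eq_of_mem_replicate ((List.take_sublist _ _).subset hx)
        omega
      · have h1 : (c.take i).sum ≤ a.sum := le_trans (sum_take_le c i) (le_of_eq hcsum)
        have h2 : ((b' ++ List.replicate a.length 0).take i).sum = b'.sum := by
          rw [List.take_append, List.take_of_length_le (by omega : b'.length ≤ i)]
          simp [List.take_replicate]
        omega
    · rw [posPart_append, posPart_replicate_zero, List.append_nil, hpos, hpc]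
  have hblen : ∀ b ∈ S, b.length = m + a.length := fun b hb => by rw [hb.1.1, hclen]
  have hdropeq : ∀ b ∈ S, (∀ p, m ≤ p → b.getD p 0 = 0) →
      b = b.take m ++ List.replicate a.length 0 := by
    intro b hb hgood
    have hlen := hblen b hb
    have hdrop : b.drop m = List.replicate a.length 0 := by
      apply List.eq_replicate_iff.mpr
      refine ⟨by simp [hlen], ?_⟩
      intro x hx
      obtain ⟨k, hk, hxk⟩ := List.mem_iff_getElem.mp hx
      have hkl : m + k < b.length := by
        simp only [List.length_drop] at hk
        omega
      rw [List.getElem_drop] at hxk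
      have h0 := hgood (m + k) (by omega)
      rw [List.getD_eq_getElem _ _ hkl] at h0
      rw [← hxk, h0]
    conv_lhs => rw [← List.take_append_drop m b]
    rw [hdrop]
  set T : Set (List ℕ) := {b | b.length = m ∧ _root_.posPart b = _root_.posPart a} with hTdef
  have hT : T.Finite := by
    have himg : (fun b' => b' ++ List.replicate a.length 0) '' T ⊆ S := by
      rintro x ⟨b', hb', rfl⟩
      exact hmapS b' hb'.1 hb'.2
    have hinj : Set.InjOn (fun b' => b' ++ List.replicate a.length 0) T :=
      fun x _ y _ h => List.append_cancel_right h
    exact Set.Finite.of_finite_image (hS.subset himg) hinj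
  show phi m (quasiLascoux c) = quasiGroth m (_root_.posPart a)
  rw [quasiLascoux, ← hSdef, finsum_mem_eq_finite_toFinset_sum _ hS, map_sum,
    quasiGroth, ← hTdef, finsum_mem_eq_finite_toFinset_sum _ hT]
  rw [← Finset.sum_filter_of_ne
    (p := fun b => ∀ p, m ≤ p → b.getD p 0 = 0)
    (f := fun b => phi m (atomPoly b)) (s := hS.toFinset) ?side]
  case side =>
    intro b _ hne
    by_contra hbad
    push_neg at hbad
    obtain ⟨p, hp, h0⟩ := hbad
    exact hne (phi_atomPoly_zero hp h0)
  apply Finset.sum_nbij' (i := fun b => b.take m) (j := fun b' => b' ++ List.replicate a.length 0)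
  · intro b hb
    rw [Finset.mem_filter, Set.Finite.mem_toFinset] at hb
    obtain ⟨hbS, hgood⟩ := hb
    rw [Set.Finite.mem_toFinset]
    have hlen := hblen b hbS
    have heq := hdropeq b hbS hgood
    constructor
    · simp [List.length_take, hlen]
    · have : _root_.posPart b = _root_.posPart (b.take m) := by
        conv_lhs => rw [heq]
        rw [posPart_append, posPart_replicate_zero, List.append_nil]
      rw [← this, hbS.2, hpc]
  · intro b' hb'
    rw [Set.Finite.mem_toFinset] at hb'
    rw [Finset.mem_filter, Set.Finite.mem_toFinset]
    refine ⟨hmapS b' hb'.1 hb'.2, ?_⟩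
    intro p hp
    have hlen : b'.length = m := hb'.1
    rw [List.getD_append_right _ _ _ _ (by omega : b'.length ≤ p)]
    rcases lt_or_ge (p - b'.length) a.length with hi | hi
    · rw [List.getD_eq_getElem _ _ (by simpa using hi)]; simp
    · rw [List.getD_eq_default _ _ (by simpa using hi)]
  · intro b hb
    rw [Finset.mem_filter, Set.Finite.mem_toFinset] at hb
    exact (hdropeq b hb.1 hb.2).symm
  · intro b' hb'
    rw [Set.Finite.mem_toFinset] at hb'
    show (b' ++ List.replicate a.length 0).take m = b'
    rw [← hb'.1]
    exact List.take_left
  · intro b hb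
    rw [Finset.mem_filter, Set.Finite.mem_toFinset] at hb
    obtain ⟨hbS, hgood⟩ := hb
    have heq := hdropeq b hbS hgood
    have hatom : atomPoly b = atomPoly (b.take m) := by
      conv_lhs => rw [heq]
      exact atomPoly_append_zeros _ _
    rw [hatom]
    exact phi_atomPoly_eq (by simp [List.length_take])
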